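/- Let N be a natural number, v ∈ ℂ^{N+1}, and z ∈ ℂ with |z| > 1. Then f(T_N v; z) = z^{2N+1}/(z−1)^{N+1} · f(v; 1 − 1/z) − ∑_{j=0}^N v_j · ∑_{k=N+1}^∞ binomial(j+k, j) z^{N−k}, where the inner series converges absolutely for |z| > 1. -/

import Mathlib

noncomputable section

/-- The `(N+1) × (N+1)` symmetric Pascal matrix, with entries `binom(j+k, j)`. -/
def pascalMatrix (R : Type*) [Semiring R] (N : ℕ) :
    Matrix (Fin (N + 1)) (Fin (N + 1)) R :=
  fun j k => (Nat.choose ((j : ℕ) + (k : ℕ)) (j : ℕ) : R)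

/-- The generating function `f(v; z) = ∑_{k=0}^N v_k z^{N-k}`. -/
def genFun {N : ℕ} (v : Fin (N + 1) → ℂ) (z : ℂ) : ℂ :=
  ∑ k : Fin (N + 1), v k * z ^ (N - (k : ℕ))

theorem stmt6 (N : ℕ) (v : Fin (N + 1) → ℂ) (z : ℂ) (hz : 1 < ‖z‖) :
    (∀ j : Fin (N + 1), Summable (fun k : ℕ =>
      ‖(((j : ℕ) + (N + 1 + k)).choose (j : ℕ) : ℂ) * z ^ ((N : ℤ) - ((N + 1 + k : ℕ) : ℤ))‖)) ∧
    genFun ((pascalMatrix ℂ N).mulVec v) z =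
      z ^ (2 * N + 1) / (z - 1) ^ (N + 1) * genFun v (1 - 1 / z)
      - ∑ j : Fin (N + 1), v j *
          ∑' k : ℕ, (((j : ℕ) + (N + 1 + k)).choose (j : ℕ) : ℂ) *
            z ^ ((N : ℤ) - ((N + 1 + k : ℕ) : ℤ)) := by
  have hz0 : z ≠ 0 := by
    intro h; rw [h, norm_zero] at hz; linarith
  have hzn0 : ‖z‖ ≠ 0 := by positivity
  have hx : ‖1 / z‖ < 1 := by
    rw [norm_div, norm_one, div_lt_one (by linarith)]; exact hz
  have hz1 : z - 1 ≠ 0 := by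
    intro h
    have : z = 1 := by linear_combination h
    rw [this, norm_one] at hz; linarith
  have hw0 : (1 : ℂ) - 1 / z ≠ 0 := by
    rw [show (1 : ℂ) - 1 / z = (z - 1) / z by field_simp]
    exact div_ne_zero hz1 hz0
  -- full hasSum for each j
  have key : ∀ j : Fin (N + 1),
      HasSum (fun n : ℕ => (((j : ℕ) + n).choose (j : ℕ) : ℂ) * z ^ ((N : ℤ) - (n : ℤ)))
        (z ^ (N : ℕ) * (1 / (1 - 1 / z) ^ ((j : ℕ) + 1))) := by
    intro j
    have h := (hasSum_choose_mul_geometric_of_norm_lt_one (j : ℕ) hx).mul_left ((z : ℂ) ^ (N : ℕ))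
    have e : (fun n : ℕ => (((j : ℕ) + n).choose (j : ℕ) : ℂ) * z ^ ((N : ℤ) - (n : ℤ)))
        = fun n : ℕ => z ^ (N : ℕ) * (((n + (j : ℕ)).choose (j : ℕ) : ℂ) * (1 / z) ^ n) := by
      funext n
      rw [add_comm (j : ℕ) n, zpow_sub₀ hz0, zpow_natCast, zpow_natCast]
      rw [one_div, inv_pow, div_eq_mul_inv]
      ring
    rw [e]
    exact h
  -- norm summability for each j (over all n)
  have keynorm : ∀ j : Fin (N + 1),
      Summable (fun n : ℕ => ‖(((j : ℕ) + n).choose (j : ℕ) : ℂ) * z ^ ((N : ℤ) - (n : ℤ))‖) := by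
    intro j
    have hx' : ‖(‖1 / z‖)‖ < 1 := by
      rwa [Real.norm_eq_abs, abs_of_nonneg (norm_nonneg _)]
    have h := (summable_choose_mul_geometric_of_norm_lt_one (j : ℕ) hx').mul_left
      ((‖z‖ : ℝ) ^ (N : ℕ))
    refine h.congr fun n => ?_
    rw [norm_mul, norm_zpow, Complex.norm_natCast, add_comm (j : ℕ) n,
      zpow_sub₀ hzn0, zpow_natCast, zpow_natCast, norm_div, norm_one]
    rw [one_div, inv_pow, div_eq_mul_inv]
    ring
  have part1 : ∀ j : Fin (N + 1), Summable (fun k : ℕ =>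
      ‖(((j : ℕ) + (N + 1 + k)).choose (j : ℕ) : ℂ) * z ^ ((N : ℤ) - ((N + 1 + k : ℕ) : ℤ))‖) := by
    intro j
    have := ((summable_nat_add_iff (N + 1)).2 (keynorm j))
    refine this.congr fun k => ?_
    rw [add_comm k (N + 1)]
  refine ⟨part1, ?_⟩
  -- tail value
  have tail : ∀ j : Fin (N + 1),
      (∑' k : ℕ, (((j : ℕ) + (N + 1 + k)).choose (j : ℕ) : ℂ) *
          z ^ ((N : ℤ) - ((N + 1 + k : ℕ) : ℤ)))
      = z ^ (N : ℕ) * (1 / (1 - 1 / z) ^ ((j : ℕ) + 1))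
        - ∑ n ∈ Finset.range (N + 1),
            (((j : ℕ) + n).choose (j : ℕ) : ℂ) * z ^ ((N : ℤ) - (n : ℤ)) := by
    intro j
    have hs := (key j).summable
    have h := Summable.sum_add_tsum_nat_add (f := fun n : ℕ =>
      (((j : ℕ) + n).choose (j : ℕ) : ℂ) * z ^ ((N : ℤ) - (n : ℤ))) (N + 1) hs
    rw [(key j).tsum_eq] at h
    have e : (∑' k : ℕ, (((j : ℕ) + (N + 1 + k)).choose (j : ℕ) : ℂ) *
        z ^ ((N : ℤ) - ((N + 1 + k : ℕ) : ℤ)))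
        = ∑' k : ℕ, (((j : ℕ) + (k + (N + 1))).choose (j : ℕ) : ℂ) *
            z ^ ((N : ℤ) - ((k + (N + 1) : ℕ) : ℤ)) := by
      apply tsum_congr
      intro k
      rw [add_comm (N + 1) k]
    rw [e, eq_sub_iff_add_eq, add_comm]
    simpa using h
  -- scalar identity
  have scalar : ∀ j : Fin (N + 1),
      z ^ (2 * N + 1) / (z - 1) ^ (N + 1) * (1 - 1 / z) ^ (N - (j : ℕ))
        = z ^ (N : ℕ) * (1 / (1 - 1 / z) ^ ((j : ℕ) + 1)) := by
    intro j
    have hj : (j : ℕ) ≤ N := Nat.lt_succ_iff.mp j.isLt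
    obtain ⟨m, hm⟩ : ∃ m, N = m + (j : ℕ) := ⟨N - j, by omega⟩
    rw [show N - (j : ℕ) = m from by omega,
      show 2 * N + 1 = 2 * (m + (j : ℕ)) + 1 from by omega,
      show (z - 1) ^ (N + 1) = (z - 1) ^ (m + (j : ℕ) + 1) from by congr 1; omega,
      show z ^ N = z ^ (m + (j : ℕ)) from by congr 1,
      show (1 : ℂ) - 1 / z = (z - 1) / z by field_simp]
    rw [div_pow, div_pow]
    field_simp
    ring
  -- rewrite LHS
  have lhs_eq : genFun ((pascalMatrix ℂ N).mulVec v) z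
      = ∑ j : Fin (N + 1), v j * ∑ n ∈ Finset.range (N + 1),
          (((j : ℕ) + n).choose (j : ℕ) : ℂ) * z ^ ((N : ℤ) - (n : ℤ)) := by
    rw [genFun]
    simp only [Matrix.mulVec, dotProduct, pascalMatrix, Finset.sum_mul]
    rw [Finset.sum_comm]
    refine Finset.sum_congr rfl fun j _ => ?_
    rw [Finset.mul_sum, ← Fin.sum_univ_eq_sum_range
      (fun n => v j * ((((j : ℕ) + n).choose (j : ℕ) : ℂ) * z ^ ((N : ℤ) - (n : ℤ))))]
    refine Finset.sum_congr rfl fun k _ => ?_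
    have hk : (k : ℕ) ≤ N := Nat.lt_succ_iff.mp k.isLt
    have hc : ((k : ℕ) + (j : ℕ)).choose (k : ℕ) = ((j : ℕ) + (k : ℕ)).choose (j : ℕ) := by
      rw [add_comm (k : ℕ) (j : ℕ), ← Nat.choose_symm (by omega : (j : ℕ) ≤ (j : ℕ) + (k : ℕ))]
      congr 1
      omega
    have hp : z ^ (N - (k : ℕ)) = z ^ ((N : ℤ) - ((k : ℕ) : ℤ)) := by
      rw [← zpow_natCast z (N - (k : ℕ))]
      congr 1
      omega
    rw [hc, hp]
    ring
  -- rewrite first RHS term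
  have rhs1 : z ^ (2 * N + 1) / (z - 1) ^ (N + 1) * genFun v (1 - 1 / z)
      = ∑ j : Fin (N + 1), v j * (z ^ (N : ℕ) * (1 / (1 - 1 / z) ^ ((j : ℕ) + 1))) := by
    rw [genFun, Finset.mul_sum]
    refine Finset.sum_congr rfl fun j _ => ?_
    rw [← scalar j]
    ring
  rw [lhs_eq, rhs1]
  rw [← Finset.sum_sub_distrib]
  refine Finset.sum_congr rfl fun j _ => ?_
  rw [tail j]
  ring
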